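/- Fix a tree G, an assignment-label pair (x,y), and realizable tree marginals μ over features and a single label. Then the exact maximum max_{p∈P(μ)} p(x,y) equals min_{(i,j)∈E} μᵢⱼ(xᵢ,xⱼ,y): the upper bound holds for every p ∈ P(μ), and it is attained by some p ∈ P(μ) when P(μ) is nonempty and the marginals μ are tree-consistent (i.e., locally consistent pseudo-marginals on a tree). -/

import Mathlib

open Finset


section aux

variable {n : ℕ} {X : Fin n → Type*} [∀ i, Fintype (X i)] [∀ i, Nonempty (X i)]

lemma sum_update_aux (i : Fin n) (F : (∀ j, X j) → ℝ) :
    ∑ z : ∀ j, X j, ∑ b : X i, F (Function.update z i b)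
      = (Fintype.card (X i) : ℝ) * ∑ z : ∀ j, X j, F z := by
  classical
  have key : ∀ (c b : X i) (w : ∀ j : {j // j ≠ i}, X j),
      Function.update ((Equiv.piSplitAt i X).symm (c, w)) i b
        = (Equiv.piSplitAt i X).symm (b, w) := by
    intro c b w; funext j
    rcases eq_or_ne j i with rfl | hj
    · simp
    · simp [Function.update, hj]
  rw [← Equiv.sum_comp (Equiv.piSplitAt i X).symm
        (fun z => ∑ b : X i, F (Function.update z i b)),
      ← Equiv.sum_comp (Equiv.piSplitAt i X).symm F]
  rw [Fintype.sum_prod_type, Fintype.sum_prod_type]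
  simp_rw [key]
  rw [Finset.sum_const, nsmul_eq_mul, Finset.card_univ]
  congr 1
  exact Finset.sum_comm

end aux

section core

variable {n : ℕ} {X : Fin n → Type*} [∀ i, Fintype (X i)] [∀ i, Nonempty (X i)]
variable (r : Fin n) (par : Fin n → Fin n) (κ : X r → ℝ) (f : ∀ v, X (par v) → X v → ℝ)

/-- partial tree-product with uniform placeholders outside `S`. -/
noncomputable def Qaux (S : Finset (Fin n)) (z : ∀ i, X i) : ℝ :=
  κ (z r) * ∏ i ∈ Finset.univ.erase r,
    (if i ∈ S then f i (z (par i)) (z i) else ((Fintype.card (X i) : ℝ))⁻¹)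

variable {r par}

lemma Qaux_update {S : Finset (Fin n)} {v : Fin n} (hvS : v ∈ S) (hvr : v ≠ r)
    (hpv : par v ≠ v) (hleaf : ∀ i, i ∈ S → i ≠ r → i ≠ v → par i ≠ v)
    (z : ∀ i, X i) (b : X v) :
    Qaux r par κ f S (Function.update z v b)
      = (Fintype.card (X v) : ℝ) * f v (z (par v)) b * Qaux r par κ f (S.erase v) z := by
  classical
  unfold Qaux
  have hvu : v ∈ Finset.univ.erase r := Finset.mem_erase.2 ⟨hvr, Finset.mem_univ v⟩
  rw [← Finset.mul_prod_erase _ _ hvu, ← Finset.mul_prod_erase _ _ hvu]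
  have h1 : Function.update z v b r = z r := Function.update_of_ne (Ne.symm hvr) _ _
  have h2 : (if v ∈ S then f v (Function.update z v b (par v)) (Function.update z v b v)
      else ((Fintype.card (X v) : ℝ))⁻¹) = f v (z (par v)) b := by
    rw [if_pos hvS, Function.update_of_ne hpv, Function.update_self]
  have h3 : (if v ∈ S.erase v then f v (z (par v)) (z v)
      else ((Fintype.card (X v) : ℝ))⁻¹) = ((Fintype.card (X v) : ℝ))⁻¹ := by
    rw [if_neg (by simp)]
  have h4 : ∀ i ∈ (Finset.univ.erase r).erase v,
      (if i ∈ S then f i (Function.update z v b (par i)) (Function.update z v b i)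
        else ((Fintype.card (X i) : ℝ))⁻¹)
      = (if i ∈ S.erase v then f i (z (par i)) (z i) else ((Fintype.card (X i) : ℝ))⁻¹) := by
    intro i hi
    obtain ⟨hiv, hir, -⟩ : i ≠ v ∧ i ≠ r ∧ i ∈ Finset.univ := by
      simpa [Finset.mem_erase] using hi
    by_cases hiS : i ∈ S
    · rw [if_pos hiS, if_pos (Finset.mem_erase.2 ⟨hiv, hiS⟩),
        Function.update_of_ne (hleaf i hiS hir hiv), Function.update_of_ne hiv]
    · rw [if_neg hiS, if_neg (fun h => hiS (Finset.mem_of_mem_erase h))]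
  rw [Finset.prod_congr rfl h4, h1, h2, h3]
  have hc : ((Fintype.card (X v) : ℝ)) ≠ 0 := by
    exact_mod_cast Fintype.card_ne_zero
  field_simp

lemma Qaux_core {S : Finset (Fin n)} {v : Fin n} (hvS : v ∈ S) (hvr : v ≠ r)
    (hpv : par v ≠ v) (hleaf : ∀ i, i ∈ S → i ≠ r → i ≠ v → par i ≠ v)
    (F : (∀ i, X i) → ℝ) (hF : ∀ z b, F (Function.update z v b) = F z)
    (h : X (par v) → X v → ℝ) :
    ∑ z : ∀ i, X i, F z * h (z (par v)) (z v) * Qaux r par κ f S z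
      = ∑ z : ∀ i, X i, F z * (∑ b, h (z (par v)) b * f v (z (par v)) b)
          * Qaux r par κ f (S.erase v) z := by
  classical
  have hc : ((Fintype.card (X v) : ℝ)) ≠ 0 := by exact_mod_cast Fintype.card_ne_zero
  have key := sum_update_aux v (fun z => F z * h (z (par v)) (z v) * Qaux r par κ f S z)
  have lhs : ∀ z : ∀ i, X i, ∑ b : X v,
      F (Function.update z v b) * h (Function.update z v b (par v)) (Function.update z v b v)
        * Qaux r par κ f S (Function.update z v b)
      = (Fintype.card (X v) : ℝ) * (F z * (∑ b, h (z (par v)) b * f v (z (par v)) b)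
          * Qaux r par κ f (S.erase v) z) := by
    intro z
    have e1 : ∀ b : X v,
        F (Function.update z v b) * h (Function.update z v b (par v)) (Function.update z v b v)
          * Qaux r par κ f S (Function.update z v b)
        = (Fintype.card (X v) : ℝ) * (F z * (h (z (par v)) b * f v (z (par v)) b)
            * Qaux r par κ f (S.erase v) z) := by
      intro b
      rw [hF, Function.update_of_ne hpv, Function.update_self,
        Qaux_update κ f hvS hvr hpv hleaf]
      ring
    rw [Finset.sum_congr rfl fun b _ => e1 b, ← Finset.mul_sum]
    congr 1
    simp only [Finset.mul_sum, Finset.sum_mul]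
  rw [Finset.sum_congr rfl (fun z _ => lhs z), ← Finset.mul_sum] at key
  exact (mul_left_cancel₀ hc key).symm

lemma Qaux_base {S : Finset (Fin n)} (hS : ∀ i, i ≠ r → i ∉ S) (h : X r → ℝ) :
    ∑ z : ∀ i, X i, h (z r) * Qaux r par κ f S z = ∑ c, h c * κ c := by
  classical
  have hconst : ∀ z : ∀ i, X i, Qaux r par κ f S z
      = κ (z r) * ∏ i ∈ Finset.univ.erase r, ((Fintype.card (X i) : ℝ))⁻¹ := by
    intro z
    unfold Qaux
    congr 1
    refine Finset.prod_congr rfl fun i hi => ?_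
    rw [if_neg (hS i (Finset.mem_erase.1 hi).1)]
  have hcr : ((Fintype.card (X r) : ℝ)) ≠ 0 := by exact_mod_cast Fintype.card_ne_zero
  have key := sum_update_aux r (fun z => h (z r) * κ (z r))
  have lhs : ∀ z : ∀ i, X i, ∑ b : X r,
      h (Function.update z r b r) * κ (Function.update z r b r)
        = ∑ c, h c * κ c := by
    intro z
    refine Finset.sum_congr rfl fun b _ => ?_
    rw [Function.update_self]
  rw [Finset.sum_congr rfl (fun z _ => lhs z), Finset.sum_const, nsmul_eq_mul,
    Finset.card_univ, Fintype.card_pi] at key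
  -- key : (∏ i, card (X i)) * ∑ c, h c * κ c = card (X r) * ∑ z, h (z r) * κ (z r)
  have hsplit : (↑(∏ i : Fin n, Fintype.card (X i)) : ℝ)
      = (Fintype.card (X r) : ℝ) * ∏ i ∈ Finset.univ.erase r, (Fintype.card (X i) : ℝ) := by
    push_cast
    rw [← Finset.mul_prod_erase _ _ (Finset.mem_univ r)]
  rw [hsplit] at key
  have key2 : (∏ i ∈ Finset.univ.erase r, (Fintype.card (X i) : ℝ)) * ∑ c, h c * κ c
      = ∑ z : ∀ i, X i, h (z r) * κ (z r) := by
    have := key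
    rw [mul_assoc] at this
    exact mul_left_cancel₀ hcr this
  calc ∑ z : ∀ i, X i, h (z r) * Qaux r par κ f S z
      = (∏ i ∈ Finset.univ.erase r, ((Fintype.card (X i) : ℝ))⁻¹)
        * ∑ z : ∀ i, X i, h (z r) * κ (z r) := by
        rw [Finset.mul_sum]
        refine Finset.sum_congr rfl fun z _ => ?_
        rw [hconst z]; ring
    _ = ∑ c, h c * κ c := by
        rw [← key2, ← mul_assoc, ← Finset.prod_mul_distrib]
        have : ∀ i ∈ Finset.univ.erase r,
            ((Fintype.card (X i) : ℝ))⁻¹ * (Fintype.card (X i) : ℝ) = 1 := by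
          intro i _
          have : ((Fintype.card (X i) : ℝ)) ≠ 0 := by exact_mod_cast Fintype.card_ne_zero
          field_simp
        rw [Finset.prod_congr rfl this, Finset.prod_const_one, one_mul]

end core

section tree

variable {n : ℕ}

lemma tree_struct (G : SimpleGraph (Fin n)) (hG : G.IsTree) (r : Fin n) :
    ∃ (par : Fin n → Fin n) (d : Fin n → ℕ) (A : Fin n → Finset (Fin n)),
      (∀ v, v ≠ r → G.Adj (par v) v) ∧
      (∀ v, v ≠ r → d (par v) + 1 = d v) ∧
      (∀ v, d v = 0 → v = r) ∧
      (A r = {r}) ∧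
      (∀ v, v ≠ r → A v = insert v (A (par v)) ∧ v ∉ A (par v)) ∧
      (∀ v, v ∈ A v ∧ r ∈ A v) ∧
      (∀ v u, u ∈ A v → u ≠ r → par u ∈ A v) ∧
      (∀ i j, G.Adj i j → (i ≠ r ∧ par i = j) ∨ (j ≠ r ∧ par j = i)) := by
  classical
  have hup := hG.existsUnique_path
  choose w hwp hwu using fun v => hup v r
  have hwr : w r = SimpleGraph.Walk.nil :=
    (hwu r SimpleGraph.Walk.nil SimpleGraph.Walk.IsPath.nil).symm
  have hnil : ∀ v, v ≠ r → ¬ (w v).Nil := fun v hv => SimpleGraph.Walk.not_nil_of_ne hv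
  refine ⟨fun v => (w v).getVert 1, fun v => (w v).length, fun v => (w v).support.toFinset,
    ?_, ?_, ?_, ?_, ?_, ?_, ?_, ?_⟩
  · intro v hv
    exact ((w v).adj_snd (hnil v hv)).symm
  · intro v hv
    have htail : w ((w v).getVert 1) = (w v).tail :=
      (hwu ((w v).getVert 1) ((w v).tail) ((hwp v).tail)).symm
    show (w ((w v).getVert 1)).length + 1 = (w v).length
    rw [htail]
    exact SimpleGraph.Walk.length_tail_add_one (hnil v hv)
  · intro v hv
    exact SimpleGraph.Walk.eq_of_length_eq_zero hv
  · show (w r).support.toFinset = {r}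
    rw [hwr]; simp
  · intro v hv
    have htail : w ((w v).getVert 1) = (w v).tail :=
      (hwu ((w v).getVert 1) ((w v).tail) ((hwp v).tail)).symm
    have hsupp : (w v).support = v :: (w v).tail.support := by
      rw [SimpleGraph.Walk.support_tail_of_not_nil _ (hnil v hv)]
      exact (w v).support_eq_cons
    constructor
    · show (w v).support.toFinset = insert v (w ((w v).getVert 1)).support.toFinset
      rw [htail]
      ext u
      simp [hsupp]
    · show v ∉ (w ((w v).getVert 1)).support.toFinset
      rw [htail]
      have hnd := (hwp v).support_nodup
      rw [hsupp] at hnd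
      have := (List.nodup_cons.mp hnd).1
      simpa using this
  · intro v
    refine ⟨?_, ?_⟩
    · show v ∈ (w v).support.toFinset
      simp [SimpleGraph.Walk.start_mem_support]
    · show r ∈ (w v).support.toFinset
      simp [SimpleGraph.Walk.end_mem_support]
  · intro v u hu hur
    have hu2 : u ∈ (w v).support := by simpa using hu
    have hdrop : w u = (w v).dropUntil u hu2 :=
      (hwu u ((w v).dropUntil u hu2) ((hwp v).dropUntil hu2)).symm
    have hlen : 0 < (w u).length := SimpleGraph.Walk.not_nil_iff_lt_length.mp (hnil u hur)
    have hmem : (w u).getVert 1 ∈ ((w v).dropUntil u hu2).support := by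
      rw [← hdrop]
      exact SimpleGraph.Walk.mem_support_iff_exists_getVert.mpr ⟨1, rfl, hlen⟩
    have := SimpleGraph.Walk.support_dropUntil_subset (w v) hu2 hmem
    show (w u).getVert 1 ∈ (w v).support.toFinset
    simpa using this
  · intro i j hij
    by_cases hj : j ∈ (w i).support
    · left
      have hir : i ≠ r := by
        rintro rfl
        rw [hwr] at hj
        simp only [SimpleGraph.Walk.support_nil, List.mem_singleton] at hj
        exact hij.ne' hj
      refine ⟨hir, ?_⟩
      obtain ⟨P, hP, hPu⟩ := hup i j
      have hepath : (SimpleGraph.Walk.cons hij SimpleGraph.Walk.nil).IsPath := by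
        rw [SimpleGraph.Walk.cons_isPath_iff]
        refine ⟨SimpleGraph.Walk.IsPath.nil, ?_⟩
        simp [hij.ne]
      have htk : (w i).takeUntil j hj = SimpleGraph.Walk.cons hij SimpleGraph.Walk.nil :=
        (hPu _ ((hwp i).takeUntil hj)).trans (hPu _ hepath).symm
      have hspec : w i = ((w i).takeUntil j hj).append ((w i).dropUntil j hj) :=
        ((w i).take_spec hj).symm
      rw [htk] at hspec
      show (w i).getVert 1 = j
      rw [hspec]
      simp [SimpleGraph.Walk.getVert_cons_succ, SimpleGraph.Walk.getVert_zero]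
    · right
      have hjr : j ≠ r := by
        rintro rfl
        exact hj ((w i).end_mem_support)
      refine ⟨hjr, ?_⟩
      have hcons : (SimpleGraph.Walk.cons hij.symm (w i)).IsPath := by
        rw [SimpleGraph.Walk.cons_isPath_iff]
        exact ⟨hwp i, hj⟩
      have hwj : w j = SimpleGraph.Walk.cons hij.symm (w i) := (hwu j _ hcons).symm
      show (w j).getVert 1 = i
      rw [hwj]
      simp [SimpleGraph.Walk.getVert_cons_succ, SimpleGraph.Walk.getVert_zero]

end tree

section realize

variable {n : ℕ} {X : Fin n → Type*} [∀ i, Fintype (X i)] [∀ i, Nonempty (X i)]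
    [∀ i, DecidableEq (X i)]

lemma tree_realize (G : SimpleGraph (Fin n)) (hG : G.IsTree) (r : Fin n)
    (ν1 : ∀ i, X i → ℝ) (ν2 : ∀ i j, X i → X j → ℝ)
    (hν0 : ∀ i j, G.Adj i j → ∀ a b, 0 ≤ ν2 i j a b)
    (hν1 : ∀ i a, 0 ≤ ν1 i a)
    (hl1 : ∀ i j, G.Adj i j → ∀ a, ∑ b, ν2 i j a b = ν1 i a)
    (hl2 : ∀ i j, G.Adj i j → ∀ b, ∑ a, ν2 i j a b = ν1 j b)
    (hsym : ∀ i j, G.Adj i j → ∀ a b, ν2 i j a b = ν2 j i b a) :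
    ∃ q : (∀ i, X i) → ℝ, (∀ z, 0 ≤ q z) ∧ (∑ z, q z = ∑ c, ν1 r c) ∧
      ∀ i j, G.Adj i j → ∀ a b,
        (∑ z : ∀ i, X i, if z i = a ∧ z j = b then q z else 0) = ν2 i j a b := by
  classical
  obtain ⟨par, d, A, hadj, hd, hd0, hAr, hAins, hAmem, hApc, hedge⟩ := tree_struct G hG r
  set f : ∀ v, X (par v) → X v → ℝ := fun v c b =>
    if ν1 (par v) c = 0 then (if b = Classical.arbitrary (X v) then 1 else 0)
    else ν2 (par v) v c b / ν1 (par v) c with hfdef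
  have hpvne : ∀ v, v ≠ r → par v ≠ v := fun v hv => (hadj v hv).ne
  have hf0 : ∀ v, v ≠ r → ∀ c b, 0 ≤ f v c b := by
    intro v hv c b
    rw [hfdef]
    dsimp only
    split_ifs with h1 h2
    · exact zero_le_one
    · exact le_refl 0
    · exact div_nonneg (hν0 (par v) v (hadj v hv) c b) (hν1 (par v) c)
  have hf1 : ∀ v, v ≠ r → ∀ c, ∑ b, f v c b = 1 := by
    intro v hv c
    rw [hfdef]
    dsimp only
    by_cases h1 : ν1 (par v) c = 0
    · simp [h1]
    · simp only [if_neg h1]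
      rw [← Finset.sum_div, hl1 (par v) v (hadj v hv) c, div_self h1]
  have hfν : ∀ v, v ≠ r → ∀ c b, ν1 (par v) c * f v c b = ν2 (par v) v c b := by
    intro v hv c b
    rw [hfdef]
    dsimp only
    by_cases h1 : ν1 (par v) c = 0
    · rw [if_pos h1, h1, zero_mul]
      have hle : ν2 (par v) v c b ≤ 0 := by
        rw [← hl1 (par v) v (hadj v hv) c] at h1
        have := Finset.sum_nonneg (fun b' (_ : b' ∈ Finset.univ) => hν0 (par v) v (hadj v hv) c b')
        have hall := (Finset.sum_eq_zero_iff_of_nonneg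
          (fun b' (_ : b' ∈ Finset.univ) => hν0 (par v) v (hadj v hv) c b')).mp h1
        exact le_of_eq (hall b (Finset.mem_univ b))
      exact (le_antisymm hle (hν0 (par v) v (hadj v hv) c b)).symm
    · rw [if_neg h1, mul_comm, div_mul_cancel₀ _ h1]
  set q : (∀ i, X i) → ℝ := Qaux r par (ν1 r) f Finset.univ with hqdef
  -- descend lemma
  have descend : ∀ (A0 : Finset (Fin n)), r ∈ A0 → (∀ u ∈ A0, u ≠ r → par u ∈ A0) →
      ∀ (g : (∀ i, X i) → ℝ), (∀ z v b, v ∉ A0 → g (Function.update z v b) = g z) →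
      ∀ (m : ℕ) (S : Finset (Fin n)), S.card ≤ m → r ∈ S → (∀ u ∈ S, u ≠ r → par u ∈ S) →
        A0 ⊆ S →
        ∑ z, g z * Qaux r par (ν1 r) f S z = ∑ z, g z * Qaux r par (ν1 r) f A0 z := by
    intro A0 hrA0 hpcA0 g hg m
    induction m with
    | zero =>
      intro S hcard hrS _ _
      have : S = ∅ := Finset.card_eq_zero.mp (Nat.le_zero.mp hcard)
      subst this
      exact absurd hrS (by simp)
    | succ m ih =>
      intro S hcard hrS hpcS hsub
      by_cases hSA : S = A0
      · rw [hSA]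
      · have hSne : (S \ A0).Nonempty := by
          rw [Finset.sdiff_nonempty]
          intro hcon
          exact hSA (Finset.Subset.antisymm hcon hsub)
        obtain ⟨v, hvmem, hvmax⟩ := Finset.exists_max_image (S \ A0) d hSne
        have hvS : v ∈ S := (Finset.mem_sdiff.mp hvmem).1
        have hvA0 : v ∉ A0 := (Finset.mem_sdiff.mp hvmem).2
        have hvr : v ≠ r := fun h => hvA0 (h ▸ hrA0)
        have hleaf : ∀ i, i ∈ S → i ≠ r → par i ≠ v := by
          intro i hiS hir hcon
          have hdi : d v + 1 = d i := by rw [← hcon]; exact hd i hir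
          by_cases hiA : i ∈ A0
          · exact hvA0 (hcon ▸ hpcA0 i hiA hir)
          · have := hvmax i (Finset.mem_sdiff.mpr ⟨hiS, hiA⟩)
            omega
        have hleaf' : ∀ i, i ∈ S → i ≠ r → i ≠ v → par i ≠ v := fun i h1 h2 _ => hleaf i h1 h2
        have step := Qaux_core (ν1 r) f hvS hvr (hpvne v hvr) hleaf' g
          (fun z b => hg z v b hvA0) (fun _ _ => (1 : ℝ))
        simp only [mul_one, one_mul] at step
        have e1 : ∀ z : ∀ i, X i, g z * (∑ b, f v (z (par v)) b)
            * Qaux r par (ν1 r) f (S.erase v) z = g z * Qaux r par (ν1 r) f (S.erase v) z := by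
          intro z
          rw [hf1 v hvr]
          ring
        rw [Finset.sum_congr rfl fun z _ => e1 z] at step
        rw [step]
        refine ih (S.erase v) ?_ (Finset.mem_erase.2 ⟨Ne.symm hvr, hrS⟩) ?_ ?_
        · have := Finset.card_erase_of_mem hvS
          omega
        · intro u hu hur
          have huS : u ∈ S := Finset.mem_of_mem_erase hu
          exact Finset.mem_erase.2 ⟨hleaf u huS hur, hpcS u huS hur⟩
        · intro u hu
          exact Finset.mem_erase.2 ⟨fun h => hvA0 (h ▸ hu), hsub hu⟩
  -- leaf property inside A v
  have hleafA : ∀ v, v ≠ r → ∀ i, i ∈ A v → i ≠ r → i ≠ v → par i ≠ v := by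
    intro v hvr i hi hir hiv hcon
    have hiA : i ∈ A (par v) := by
      rw [(hAins v hvr).1] at hi
      exact (Finset.mem_insert.mp hi).resolve_left hiv
    have := hApc (par v) i hiA hir
    rw [hcon] at this
    exact (hAins v hvr).2 this
  -- chain marginal lemma
  have T : ∀ (m : ℕ) (v : Fin n), d v ≤ m → ∀ h : X v → ℝ,
      ∑ z, h (z v) * Qaux r par (ν1 r) f (A v) z = ∑ c, h c * ν1 v c := by
    intro m
    induction m with
    | zero =>
      intro v hv h
      have hvr : v = r := hd0 v (Nat.le_zero.mp hv)
      subst hvr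
      rw [hAr]
      exact Qaux_base (ν1 v) f (fun i hir => by simp [hir]) h
    | succ m ih =>
      intro v hdv h
      by_cases hvr : v = r
      · subst hvr
        rw [hAr]
        exact Qaux_base (ν1 v) f (fun i hir => by simp [hir]) h
      · have hvA : v ∈ A v := (hAmem v).1
        have step := Qaux_core (ν1 r) f hvA hvr (hpvne v hvr) (hleafA v hvr)
          (fun _ => (1 : ℝ)) (fun _ _ => rfl) (fun _ b => h b)
        have herase : (A v).erase v = A (par v) := by
          rw [(hAins v hvr).1, Finset.erase_insert (hAins v hvr).2]
        rw [herase] at step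
        simp only [one_mul] at step
        rw [step]
        have hdp : d (par v) ≤ m := by
          have := hd v hvr
          omega
        rw [ih (par v) hdp (fun c => ∑ b, h b * f v c b)]
        have e2 : ∀ c, (∑ b, h b * f v c b) * ν1 (par v) c = ∑ b, h b * ν2 (par v) v c b := by
          intro c
          rw [Finset.sum_mul]
          refine Finset.sum_congr rfl fun b _ => ?_
          rw [mul_assoc, mul_comm (f v c b), hfν v hvr]
        rw [Finset.sum_congr rfl fun c _ => e2 c, Finset.sum_comm]
        refine Finset.sum_congr rfl fun b _ => ?_
        rw [← Finset.mul_sum, hl2 (par v) v (hadj v hvr)]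
  -- parent-edge marginals
  have M : ∀ v, v ≠ r → ∀ (a : X (par v)) (b : X v),
      (∑ z : ∀ i, X i, if z (par v) = a ∧ z v = b then q z else 0) = ν2 (par v) v a b := by
    intro v hvr a b
    have hvA : v ∈ A v := (hAmem v).1
    have hrA : r ∈ A v := (hAmem v).2
    have hpA : par v ∈ A v := by
      rw [(hAins v hvr).1]
      exact Finset.mem_insert_of_mem (hAmem (par v)).1
    set g : (∀ i, X i) → ℝ := fun z => if z (par v) = a ∧ z v = b then 1 else 0 with hgdef
    have hgdep : ∀ (z : ∀ i, X i) (u : Fin n) (c : X u), u ∉ A v →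
        g (Function.update z u c) = g z := by
      intro z u c huA
      have h1 : par v ≠ u := fun h => huA (h ▸ hpA)
      have h2 : v ≠ u := fun h => huA (h ▸ hvA)
      rw [hgdef]
      dsimp only
      rw [Function.update_of_ne h1, Function.update_of_ne h2]
    have hiq : ∀ z : ∀ i, X i, (if z (par v) = a ∧ z v = b then q z else 0) = g z * q z := by
      intro z
      rw [hgdef]
      by_cases hcond : z (par v) = a ∧ z v = b <;> simp [hcond]
    rw [Finset.sum_congr rfl fun z _ => hiq z, hqdef]
    rw [descend (A v) hrA (fun u hu hur => hApc v u hu hur) g hgdep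
      Finset.univ.card Finset.univ le_rfl (Finset.mem_univ r)
      (fun u _ hur => Finset.mem_univ (par u)) (Finset.subset_univ _)]
    have step := Qaux_core (ν1 r) f hvA hvr (hpvne v hvr) (hleafA v hvr)
      (fun _ => (1 : ℝ)) (fun _ _ => rfl)
      (fun c b' => if c = a ∧ b' = b then (1 : ℝ) else 0)
    have herase : (A v).erase v = A (par v) := by
      rw [(hAins v hvr).1, Finset.erase_insert (hAins v hvr).2]
    rw [herase] at step
    simp only [one_mul] at step
    rw [step]
    have hΦ : ∀ c, (∑ b', (if c = a ∧ b' = b then (1 : ℝ) else 0) * f v c b')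
        = (fun c' => if c' = a then f v c' b else 0) c := by
      intro c
      dsimp only
      by_cases hc : c = a
      · subst hc
        rw [if_pos rfl]
        have e : ∀ b' : X v, ((if c = c ∧ b' = b then (1 : ℝ) else 0) * f v c b')
            = (if b' = b then f v c b' else 0) := by
          intro b'
          by_cases hb : b' = b <;> simp [hb]
        rw [Finset.sum_congr rfl fun b' _ => e b',
          Finset.sum_ite_eq' Finset.univ b (fun b' => f v c b'), if_pos (Finset.mem_univ b)]
      · simp [hc]
    rw [Finset.sum_congr rfl fun z _ => by rw [hΦ (z (par v))]]
    rw [T (d (par v)) (par v) le_rfl (fun c' => if c' = a then f v c' b else 0)]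
    have e3 : ∀ c : X (par v), ((if c = a then f v c b else 0) * ν1 (par v) c)
        = (if c = a then f v c b * ν1 (par v) c else 0) := by
      intro c
      by_cases hc : c = a <;> simp [hc]
    rw [Finset.sum_congr rfl fun c _ => e3 c,
      Finset.sum_ite_eq' Finset.univ a (fun c => f v c b * ν1 (par v) c),
      if_pos (Finset.mem_univ a), mul_comm, hfν v hvr]
  -- normalization
  have hnormq : ∑ z, q z = ∑ c, ν1 r c := by
    have h1 : ∀ z : (∀ i, X i), q z = (fun (_ : ∀ i, X i) => (1 : ℝ)) z * q z := by
      intro z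
      simp
    rw [Finset.sum_congr rfl fun z _ => h1 z, hqdef]
    rw [descend {r} (Finset.mem_singleton_self r)
      (fun u hu hur => absurd (Finset.mem_singleton.mp hu) hur)
      (fun _ => (1 : ℝ)) (fun _ _ _ _ => rfl)
      Finset.univ.card Finset.univ le_rfl (Finset.mem_univ r)
      (fun u _ hur => Finset.mem_univ (par u)) (Finset.subset_univ _)]
    have := Qaux_base (ν1 r) (par := par) f
      (fun i hir => fun h => hir (Finset.mem_singleton.mp h)) (fun _ => (1 : ℝ))
    simpa using this
  -- nonnegativity
  have hq0 : ∀ z, 0 ≤ q z := by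
    intro z
    rw [hqdef]
    unfold Qaux
    apply mul_nonneg (hν1 r _)
    apply Finset.prod_nonneg
    intro i hi
    rw [if_pos (Finset.mem_univ i)]
    exact hf0 i (Finset.mem_erase.mp hi).1 _ _
  refine ⟨q, hq0, hnormq, ?_⟩
  intro i j hij a b
  rcases hedge i j hij with ⟨hir, hpi⟩ | ⟨hjr, hpj⟩
  · subst hpi
    have hcomm : ∀ z : ∀ i, X i, (if z i = a ∧ z (par i) = b then q z else 0)
        = (if z (par i) = b ∧ z i = a then q z else 0) := by
      intro z
      exact if_congr and_comm rfl rfl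
    rw [Finset.sum_congr rfl fun z _ => hcomm z, M i hir b a]
    exact (hsym i (par i) hij a b).symm
  · subst hpj
    exact M j hjr a b

end realize

/-- Exact maximum of `p(x,y)` over `P(μ)`: it equals `min_{(i,j)∈E} μᵢⱼ(xᵢ,xⱼ,y)` —
the upper bound holds for every member, and it is attained when `P(μ)` is nonempty and
`μ` is tree-consistent (nonnegative, locally consistent, normalized). -/
theorem stmt19 {n : ℕ} {X : Fin n → Type*} {Y : Type*} [∀ i, Fintype (X i)] [Fintype Y]
    [∀ i, Nonempty (X i)] [Nonempty Y] [∀ i, DecidableEq (X i)] [DecidableEq Y]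
    (G : SimpleGraph (Fin n)) [DecidableRel G.Adj] (hG : G.IsTree)
    (hne : (Finset.univ.filter (fun e : Fin n × Fin n => e.1 < e.2 ∧ G.Adj e.1 e.2)).Nonempty)
    (μ1 : ∀ i, X i → Y → ℝ) (μ2 : ∀ i j, X i → X j → Y → ℝ)
    -- tree-consistency of the marginals
    (hμ0 : ∀ i j a b ybar, 0 ≤ μ2 i j a b ybar)
    (hloc1 : ∀ i j, G.Adj i j → ∀ a ybar, ∑ b, μ2 i j a b ybar = μ1 i a ybar)
    (hloc2 : ∀ i j, G.Adj i j → ∀ b ybar, ∑ a, μ2 i j a b ybar = μ1 j b ybar)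
    (hnorm : ∀ i j, G.Adj i j → ∑ a, ∑ b, ∑ ybar, μ2 i j a b ybar = 1)
    -- realizability: P(μ) is nonempty
    (hPne : ∃ p : (∀ i, X i) → Y → ℝ, (∀ z ybar, 0 ≤ p z ybar) ∧ (∑ z, ∑ ybar, p z ybar = 1) ∧
      ∀ i j, G.Adj i j → ∀ a b ybar,
        (∑ z, if z i = a ∧ z j = b then p z ybar else 0) = μ2 i j a b ybar)
    (x : ∀ i, X i) (y : Y) :
    IsGreatest
      { v : ℝ | ∃ p : (∀ i, X i) → Y → ℝ,
          ((∀ z ybar, 0 ≤ p z ybar) ∧ (∑ z, ∑ ybar, p z ybar = 1) ∧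
            ∀ i j, G.Adj i j → ∀ a b ybar,
              (∑ z, if z i = a ∧ z j = b then p z ybar else 0) = μ2 i j a b ybar)
          ∧ v = p x y }
      ((Finset.univ.filter (fun e : Fin n × Fin n => e.1 < e.2 ∧ G.Adj e.1 e.2)).inf' hne
        (fun e => μ2 e.1 e.2 (x e.1) (x e.2) y)) := by
  classical
  obtain ⟨p₀, hp₀0, hp₀n, hp₀m⟩ := hPne
  have hsymm : ∀ i j, G.Adj i j → ∀ (a : X i) (b : X j) ybar,
      μ2 i j a b ybar = μ2 j i b a ybar := by
    intro i j hij a b ybar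
    rw [← hp₀m i j hij a b ybar, ← hp₀m j i hij.symm b a ybar]
    exact Finset.sum_congr rfl fun z _ => if_congr and_comm rfl rfl
  obtain ⟨e₀, he₀⟩ := id hne
  rw [Finset.mem_filter] at he₀
  obtain ⟨-, hlt₀, hadj₀⟩ := he₀
  set m := (Finset.univ.filter (fun e : Fin n × Fin n => e.1 < e.2 ∧ G.Adj e.1 e.2)).inf' hne
    (fun e => μ2 e.1 e.2 (x e.1) (x e.2) y) with hmdef
  have hm0 : 0 ≤ m :=
    Finset.le_inf' hne _ (fun e _ => hμ0 e.1 e.2 (x e.1) (x e.2) y)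
  have hmle : ∀ i j, G.Adj i j → m ≤ μ2 i j (x i) (x j) y := by
    intro i j hij
    rcases hij.ne.lt_or_gt with hlt | hlt
    · exact Finset.inf'_le _ (Finset.mem_filter.mpr ⟨Finset.mem_univ (i, j), hlt, hij⟩)
    · rw [hsymm i j hij]
      exact Finset.inf'_le _ (Finset.mem_filter.mpr ⟨Finset.mem_univ (j, i), hlt, hij.symm⟩)
  -- upper bound for any member of P(μ)
  have hub : ∀ p' : (∀ i, X i) → Y → ℝ, (∀ z ybar, 0 ≤ p' z ybar) →
      (∀ i j, G.Adj i j → ∀ a b ybar,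
        (∑ z, if z i = a ∧ z j = b then p' z ybar else 0) = μ2 i j a b ybar) →
      p' x y ≤ m := by
    intro p' hp'0 hp'm
    rw [hmdef]
    apply Finset.le_inf'
    intro e he
    rw [Finset.mem_filter] at he
    obtain ⟨-, hlt, hadj⟩ := he
    rw [← hp'm e.1 e.2 hadj (x e.1) (x e.2) y]
    have hterm : (if x e.1 = x e.1 ∧ x e.2 = x e.2 then p' x y else 0) = p' x y := by
      rw [if_pos ⟨rfl, rfl⟩]
    rw [← hterm]
    refine Finset.single_le_sum
      (f := fun z => if z e.1 = x e.1 ∧ z e.2 = x e.2 then p' z y else 0)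
      (fun z _ => ?_) (Finset.mem_univ x)
    show (0 : ℝ) ≤ if z e.1 = x e.1 ∧ z e.2 = x e.2 then p' z y else 0
    by_cases hc : z e.1 = x e.1 ∧ z e.2 = x e.2
    · rw [if_pos hc]; exact hp'0 z y
    · rw [if_neg hc]
  -- every vertex has a neighbour
  have hnb : ∀ i : Fin n, ∃ j, G.Adj i j := by
    intro i
    by_cases hi : i = e₀.1
    · exact ⟨e₀.2, hi ▸ hadj₀⟩
    · obtain ⟨pw⟩ := hG.isConnected.preconnected i e₀.1
      exact ⟨pw.getVert 1, pw.adj_snd (SimpleGraph.Walk.not_nil_of_ne hi)⟩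
  -- residual marginal realization, for each fixed label value
  have hres : ∀ ybar : Y, ∃ q : (∀ i, X i) → ℝ, (∀ z, 0 ≤ q z) ∧
      (∑ z, q z = ∑ c, (μ1 e₀.1 c ybar - if ybar = y ∧ c = x e₀.1 then m else 0)) ∧
      ∀ i j, G.Adj i j → ∀ a b,
        (∑ z : ∀ i, X i, if z i = a ∧ z j = b then q z else 0)
          = μ2 i j a b ybar - (if ybar = y ∧ a = x i ∧ b = x j then m else 0) := by
    intro ybar
    have hl1 : ∀ i j, G.Adj i j → ∀ a : X i,
        ∑ b, (μ2 i j a b ybar - (if ybar = y ∧ a = x i ∧ b = x j then m else 0))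
          = μ1 i a ybar - (if ybar = y ∧ a = x i then m else 0) := by
      intro i j hij a
      rw [Finset.sum_sub_distrib, hloc1 i j hij a ybar]
      congr 1
      have e1 : ∀ b : X j, (if ybar = y ∧ a = x i ∧ b = x j then m else 0)
          = (if b = x j then (if ybar = y ∧ a = x i then m else 0) else 0) := by
        intro b
        by_cases h1 : b = x j <;> by_cases h2 : ybar = y ∧ a = x i
        · rw [if_pos ⟨h2.1, h2.2, h1⟩, if_pos h1, if_pos h2]
        · rw [if_neg (fun hc => h2 ⟨hc.1, hc.2.1⟩), if_pos h1, if_neg h2]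
        · rw [if_neg (fun hc => h1 hc.2.2), if_neg h1]
        · rw [if_neg (fun hc => h1 hc.2.2), if_neg h1]
      rw [Finset.sum_congr rfl fun b _ => e1 b,
        Finset.sum_ite_eq' Finset.univ (x j) (fun _ => if ybar = y ∧ a = x i then m else 0),
        if_pos (Finset.mem_univ (x j))]
    have hl2 : ∀ i j, G.Adj i j → ∀ b : X j,
        ∑ a, (μ2 i j a b ybar - (if ybar = y ∧ a = x i ∧ b = x j then m else 0))
          = μ1 j b ybar - (if ybar = y ∧ b = x j then m else 0) := by
      intro i j hij b
      rw [Finset.sum_sub_distrib, hloc2 i j hij b ybar]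
      congr 1
      have e1 : ∀ a : X i, (if ybar = y ∧ a = x i ∧ b = x j then m else 0)
          = (if a = x i then (if ybar = y ∧ b = x j then m else 0) else 0) := by
        intro a
        by_cases h1 : a = x i <;> by_cases h2 : ybar = y ∧ b = x j
        · rw [if_pos ⟨h2.1, h1, h2.2⟩, if_pos h1, if_pos h2]
        · rw [if_neg (fun hc => h2 ⟨hc.1, hc.2.2⟩), if_pos h1, if_neg h2]
        · rw [if_neg (fun hc => h1 hc.2.1), if_neg h1]
        · rw [if_neg (fun hc => h1 hc.2.1), if_neg h1]
      rw [Finset.sum_congr rfl fun a _ => e1 a,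
        Finset.sum_ite_eq' Finset.univ (x i) (fun _ => if ybar = y ∧ b = x j then m else 0),
        if_pos (Finset.mem_univ (x i))]
    apply tree_realize G hG e₀.1
      (fun i a => μ1 i a ybar - if ybar = y ∧ a = x i then m else 0)
      (fun i j a b => μ2 i j a b ybar - if ybar = y ∧ a = x i ∧ b = x j then m else 0)
    · intro i j hij a b
      by_cases hc : ybar = y ∧ a = x i ∧ b = x j
      · rw [if_pos hc]
        obtain ⟨h1, h2, h3⟩ := hc
        subst h1; subst h2; subst h3
        exact sub_nonneg.mpr (hmle i j hij)
      · rw [if_neg hc, sub_zero]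
        exact hμ0 i j a b ybar
    · intro i a
      obtain ⟨j, hij⟩ := hnb i
      rw [← hl1 i j hij a]
      apply Finset.sum_nonneg
      intro b _
      by_cases hc : ybar = y ∧ a = x i ∧ b = x j
      · rw [if_pos hc]
        obtain ⟨h1, h2, h3⟩ := hc
        subst h1; subst h2; subst h3
        exact sub_nonneg.mpr (hmle i j hij)
      · rw [if_neg hc, sub_zero]
        exact hμ0 i j a b ybar
    · exact fun i j hij a => hl1 i j hij a
    · exact fun i j hij b => hl2 i j hij b
    · intro i j hij a b
      rw [hsymm i j hij a b ybar]
      congr 1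
      exact if_congr (by tauto) rfl rfl
  choose qf hq0 hqs hqm using hres
  set p : (∀ i, X i) → Y → ℝ :=
    fun z ybar => (if z = x ∧ ybar = y then m else 0) + qf ybar z with hpdef
  have hp0 : ∀ z ybar, 0 ≤ p z ybar := by
    intro z ybar
    apply add_nonneg _ (hq0 ybar z)
    split_ifs
    · exact hm0
    · exact le_refl 0
  have hpm : ∀ i j, G.Adj i j → ∀ a b ybar,
      (∑ z, if z i = a ∧ z j = b then p z ybar else 0) = μ2 i j a b ybar := by
    intro i j hij a b ybar
    have e1 : ∀ z : ∀ i, X i, (if z i = a ∧ z j = b then p z ybar else 0)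
        = (if z i = a ∧ z j = b then (if z = x ∧ ybar = y then m else 0) else 0)
          + (if z i = a ∧ z j = b then qf ybar z else 0) := by
      intro z
      rw [hpdef]
      by_cases hc : z i = a ∧ z j = b <;> simp [hc]
    rw [Finset.sum_congr rfl fun z _ => e1 z, Finset.sum_add_distrib, hqm ybar i j hij a b]
    have e2 : ∀ z : ∀ i, X i,
        (if z i = a ∧ z j = b then (if z = x ∧ ybar = y then m else 0) else 0)
        = (if z = x then (if ybar = y ∧ a = x i ∧ b = x j then m else 0) else 0) := by
      intro z
      by_cases hz : z = x
      · subst hz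
        by_cases hc : z i = a ∧ z j = b <;> by_cases hy : ybar = y
        · rw [if_pos hc, if_pos ⟨rfl, hy⟩, if_pos rfl, if_pos ⟨hy, hc.1.symm, hc.2.symm⟩]
        · rw [if_pos hc, if_neg (fun hh => hy hh.2), if_pos rfl,
            if_neg (fun hh => hy hh.1)]
        · rw [if_neg hc, if_pos rfl, if_neg (fun hh => hc ⟨hh.2.1.symm, hh.2.2.symm⟩)]
        · rw [if_neg hc, if_pos rfl, if_neg (fun hh => hy hh.1)]
      · rw [if_neg hz]
        by_cases hc : z i = a ∧ z j = b
        · rw [if_pos hc, if_neg (fun hh => hz hh.1)]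
        · rw [if_neg hc]
    rw [Finset.sum_congr rfl fun z _ => e2 z,
      Finset.sum_ite_eq' Finset.univ x (fun _ => if ybar = y ∧ a = x i ∧ b = x j then m else 0),
      if_pos (Finset.mem_univ x)]
    ring
  have hpn : ∑ z, ∑ ybar, p z ybar = 1 := by
    have e1 : ∀ z : ∀ i, X i, ∑ ybar, p z ybar
        = (if z = x then m else 0) + ∑ ybar, qf ybar z := by
      intro z
      rw [hpdef]
      rw [Finset.sum_add_distrib]
      congr 1
      have e2 : ∀ ybar : Y, (if z = x ∧ ybar = y then m else 0)
          = (if ybar = y then (if z = x then m else 0) else 0) := by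
        intro ybar
        by_cases h1 : ybar = y <;> by_cases h2 : z = x
        · rw [if_pos ⟨h2, h1⟩, if_pos h1, if_pos h2]
        · rw [if_neg (fun hh => h2 hh.1), if_pos h1, if_neg h2]
        · rw [if_neg (fun hh => h1 hh.2), if_neg h1]
        · rw [if_neg (fun hh => h1 hh.2), if_neg h1]
      rw [Finset.sum_congr rfl fun ybar _ => e2 ybar,
        Finset.sum_ite_eq' Finset.univ y (fun _ => if z = x then m else 0),
        if_pos (Finset.mem_univ y)]
    rw [Finset.sum_congr rfl fun z _ => e1 z, Finset.sum_add_distrib,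
      Finset.sum_ite_eq' Finset.univ x (fun _ => m), if_pos (Finset.mem_univ x)]
    have e3 : ∑ z : ∀ i, X i, ∑ ybar, qf ybar z = 1 - m := by
      rw [Finset.sum_comm]
      rw [Finset.sum_congr rfl fun ybar _ => hqs ybar]
      rw [Finset.sum_comm]
      have e4 : ∀ c : X e₀.1, ∑ ybar : Y,
          (μ1 e₀.1 c ybar - if ybar = y ∧ c = x e₀.1 then m else 0)
          = (∑ ybar : Y, μ1 e₀.1 c ybar) - (if c = x e₀.1 then m else 0) := by
        intro c
        rw [Finset.sum_sub_distrib]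
        congr 1
        have e5 : ∀ ybar : Y, (if ybar = y ∧ c = x e₀.1 then m else 0)
            = (if ybar = y then (if c = x e₀.1 then m else 0) else 0) := by
          intro ybar
          by_cases h1 : ybar = y <;> by_cases h2 : c = x e₀.1
          · rw [if_pos ⟨h1, h2⟩, if_pos h1, if_pos h2]
          · rw [if_neg (fun hh => h2 hh.2), if_pos h1, if_neg h2]
          · rw [if_neg (fun hh => h1 hh.1), if_neg h1]
          · rw [if_neg (fun hh => h1 hh.1), if_neg h1]
        rw [Finset.sum_congr rfl fun ybar _ => e5 ybar,
          Finset.sum_ite_eq' Finset.univ y (fun _ => if c = x e₀.1 then m else 0),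
          if_pos (Finset.mem_univ y)]
      rw [Finset.sum_congr rfl fun c _ => e4 c, Finset.sum_sub_distrib,
        Finset.sum_ite_eq' Finset.univ (x e₀.1) (fun _ => m), if_pos (Finset.mem_univ (x e₀.1))]
      congr 1
      -- ∑ c, ∑ ybar, μ1 e₀.1 c ybar = 1
      have e6 : ∀ c (ybar : Y), μ1 e₀.1 c ybar = ∑ b, μ2 e₀.1 e₀.2 c b ybar :=
        fun c ybar => (hloc1 e₀.1 e₀.2 hadj₀ c ybar).symm
      calc ∑ c, ∑ ybar, μ1 e₀.1 c ybar
          = ∑ c, ∑ ybar, ∑ b, μ2 e₀.1 e₀.2 c b ybar := by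
            refine Finset.sum_congr rfl fun c _ => Finset.sum_congr rfl fun ybar _ => e6 c ybar
        _ = ∑ c, ∑ b, ∑ ybar, μ2 e₀.1 e₀.2 c b ybar := by
            refine Finset.sum_congr rfl fun c _ => Finset.sum_comm
        _ = 1 := hnorm e₀.1 e₀.2 hadj₀
    rw [e3]
    ring
  have hvx : p x y = m + qf y x := by
    show (if x = x ∧ y = y then m else 0) + qf y x = m + qf y x
    rw [if_pos ⟨rfl, rfl⟩]
  have hpxy : p x y = m := by
    have hle : p x y ≤ m := hub p hp0 hpm
    have hge : m ≤ p x y := by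
      rw [hvx]
      have := hq0 y x
      linarith
    exact le_antisymm hle hge
  constructor
  · exact ⟨p, ⟨hp0, hpn, hpm⟩, hpxy.symm⟩
  · rintro v ⟨p', ⟨hp'0, hp'n, hp'm⟩, rfl⟩
    exact hub p' hp'0 hp'm
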